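/- Let □_d = [−1,1]^d be the standard cube of dimension d in ℝ^d. Then for all 0 ≤ k ≤ d−1, the number of k-dimensional faces of the Nesterov rounding □_d + □_d* is f_k(□_d + □_d*) = C(d, k+1) · 2^{d−k−1} · (3^{k+1} − 1), where C denotes the binomial coefficient. -/

import Mathlib

open Pointwise RealInnerProductSpace

noncomputable section

abbrev E (d : ℕ) : Type := EuclideanSpace ℝ (Fin d)

def IsPolytope {d : ℕ} (P : Set (E d)) : Prop :=
  ∃ V : Finset (E d), V.Nonempty ∧ P = convexHull ℝ (V : Set (E d))

def maximizers {d : ℕ} (P : Set (E d)) (c : E d) : Set (E d) :=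
  {x ∈ P | ∀ y ∈ P, ⟪y, c⟫ ≤ ⟪x, c⟫}

def IsFace {d : ℕ} (P F : Set (E d)) : Prop :=
  F = ∅ ∨ F = P ∨ ∃ c : E d, c ≠ 0 ∧ F = maximizers P c

def IsNontrivialFace {d : ℕ} (P F : Set (E d)) : Prop :=
  IsFace P F ∧ F ≠ ∅ ∧ F ≠ P

def polarDual {d : ℕ} (P : Set (E d)) : Set (E d) :=
  {x | ∀ y ∈ P, ⟪x, y⟫ ≤ 1}

def dualFace {d : ℕ} (P F : Set (E d)) : Set (E d) :=
  {x ∈ polarDual P | ∀ f ∈ F, ⟪x, f⟫ = 1}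

def normalCone {d : ℕ} (P F : Set (E d)) : Set (E d) :=
  {c | maximizers P c = F}

def IsPerfectlyCentered {d : ℕ} (P : Set (E d)) : Prop :=
  ∀ F : Set (E d), IsFace P F → F.Nonempty →
    (intrinsicInterior ℝ F ∩ normalCone P F).Nonempty

def dimSet {d : ℕ} (F : Set (E d)) : ℕ :=
  Module.finrank ℝ (affineSpan ℝ F).direction

def fVec {d : ℕ} (P : Set (E d)) (k : ℕ) : ℕ :=
  {F : Set (E d) | IsFace P F ∧ F.Nonempty ∧ dimSet F = k}.ncard

def stdCube (d : ℕ) : Set (E d) := {x | ∀ i, |x i| ≤ 1}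

def sg (t : Fin 5) : ℝ := if t = 0 ∨ t = 3 then 1 else if t = 1 ∨ t = 4 then -1 else 0

def Aset {d : ℕ} (φ : Fin d → Fin 5) : Finset (Fin d) :=
  Finset.univ.filter (fun i => φ i = 3 ∨ φ i = 4)

def Phi {d : ℕ} (φ : Fin d → Fin 5) : Set (E d) :=
  {z | (∀ i, φ i = 2 → |z i| ≤ 1) ∧ (∀ i, φ i = 0 ∨ φ i = 1 → z i = sg (φ i)) ∧
       (∀ i ∈ Aset φ, 1 ≤ sg (φ i) * z i) ∧
       (∑ i ∈ Aset φ, sg (φ i) * z i) = (Aset φ).card + 1}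

def pbase {d : ℕ} (φ : Fin d → Fin 5) : E d :=
  WithLp.toLp 2 (fun i => if φ i = 2 then 0 else if φ i = 0 ∨ φ i = 1 then sg (φ i)
           else sg (φ i) * (1 + 1/(Aset φ).card))

def phiOf {d : ℕ} (c : E d) : Fin d → Fin 5 := fun i =>
  if c i = 0 then 2
  else if ∀ j, |c j| ≤ |c i| then (if 0 < c i then 3 else 4)
  else (if 0 < c i then 0 else 1)

def cOf {d : ℕ} (φ : Fin d → Fin 5) : E d :=
  WithLp.toLp 2 (fun i => sg (φ i) * (if φ i = 3 ∨ φ i = 4 then 2 else 1))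


lemma inner_sum' {d : ℕ} (x y : E d) : ⟪x, y⟫ = ∑ i, x i * y i := by
  simp [PiLp.inner_apply, RCLike.inner_apply, conj_trivial]
  exact Finset.sum_congr rfl (fun _ _ => mul_comm _ _)

lemma maximizers_add {d : ℕ} (P Q : Set (E d)) (c : E d) :
    maximizers (P + Q) c = maximizers P c + maximizers Q c := by
  ext z
  constructor
  · rintro ⟨hz, hmax⟩
    obtain ⟨p, hp, q, hq, rfl⟩ := Set.mem_add.1 hz
    refine Set.mem_add.2 ⟨p, ⟨hp, fun y hy => ?_⟩, q, ⟨hq, fun y hy => ?_⟩, rfl⟩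
    · have := hmax (y + q) (Set.add_mem_add hy hq)
      simpa [inner_add_left] using this
    · have := hmax (p + y) (Set.add_mem_add hp hy)
      simpa [inner_add_left] using this
  · rintro hz
    obtain ⟨p, ⟨hp, hpm⟩, q, ⟨hq, hqm⟩, rfl⟩ := Set.mem_add.1 hz
    refine ⟨Set.add_mem_add hp hq, fun y hy => ?_⟩
    obtain ⟨p', hp', q', hq', rfl⟩ := Set.mem_add.1 hy
    have := add_le_add (hpm p' hp') (hqm q' hq')
    simpa [inner_add_left] using this

lemma maximizers_cube {d : ℕ} (c : E d) :
    maximizers (stdCube d) c = {x | ∀ i, |x i| ≤ 1 ∧ x i * c i = |c i|} := by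
  have hterm : ∀ (x : E d), (∀ i, |x i| ≤ 1) → ∀ i, x i * c i ≤ |c i| := by
    intro x hx i
    calc x i * c i ≤ |x i * c i| := le_abs_self _
      _ = |x i| * |c i| := abs_mul _ _
      _ ≤ 1 * |c i| := by gcongr; exact hx i
      _ = |c i| := one_mul _
  have hstar : ∀ (x : E d), (∀ i, x i * c i = |c i|) → ∀ y ∈ stdCube d, ⟪y,c⟫ ≤ ⟪x,c⟫ := by
    intro x hx y hy
    rw [inner_sum', inner_sum']
    calc ∑ i, y i * c i ≤ ∑ i, |c i| := Finset.sum_le_sum (fun i _ => hterm y hy i)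
      _ = ∑ i, x i * c i := by simp [hx]
  ext x
  constructor
  · rintro ⟨hx, hmax⟩
    intro i
    refine ⟨hx i, ?_⟩
    -- xstar
    set xs : E d := WithLp.toLp 2 (fun j => if c j < 0 then (-1:ℝ) else 1) with hxs
    have hxsc : ∀ j, xs j * c j = |c j| := by
      intro j
      by_cases h : c j < 0
      · simp [hxs, h, abs_of_neg h]
      · simp [hxs, h, abs_of_nonneg (not_lt.1 h)]
    have hxscube : xs ∈ stdCube d := by
      intro j; by_cases h : c j < 0 <;> simp [hxs, h]
    have h1 : ⟪xs, c⟫ ≤ ⟪x, c⟫ := hmax xs hxscube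
    have h2 : (∑ i, x i * c i) = ∑ i, |c i| := by
      have hle : (∑ i, x i * c i) ≤ ∑ i, |c i| := Finset.sum_le_sum (fun i _ => hterm x hx i)
      have hge : (∑ i, |c i|) ≤ ∑ i, x i * c i := by
        have := h1; rw [inner_sum', inner_sum'] at this
        calc (∑ i, |c i|) = ∑ i, xs i * c i := by simp [hxsc]
          _ ≤ ∑ i, x i * c i := this
      linarith
    have := (Finset.sum_eq_sum_iff_of_le (by intro i _; exact hterm x hx i)).1 h2
    exact this i (Finset.mem_univ i)
  · intro hx
    exact ⟨fun i => (hx i).1, hstar x (fun i => (hx i).2) ⟩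

lemma polar_cube {d : ℕ} : polarDual (stdCube d) = {x : E d | ∑ i, |x i| ≤ 1} := by
  ext x
  constructor
  · intro hx
    set ys : E d := WithLp.toLp 2 (fun j => if x j < 0 then (-1:ℝ) else 1) with hys
    have hycube : ys ∈ stdCube d := by
      intro j; by_cases h : x j < 0 <;> simp [hys, h]
    have := hx ys hycube
    rw [inner_sum'] at this
    have heq : ∀ j, x j * ys j = |x j| := by
      intro j
      by_cases h : x j < 0
      · simp [hys, h, abs_of_neg h]
      · simp [hys, h, abs_of_nonneg (not_lt.1 h)]
    simpa [heq] using this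
  · intro hx y hy
    rw [inner_sum']
    calc ∑ i, x i * y i ≤ ∑ i, |x i| := by
          refine Finset.sum_le_sum (fun i _ => ?_)
          calc x i * y i ≤ |x i * y i| := le_abs_self _
            _ = |x i| * |y i| := abs_mul _ _
            _ ≤ |x i| * 1 := by gcongr; exact (hy i)
            _ = |x i| := mul_one _
      _ ≤ 1 := hx

lemma maximizers_cross {d : ℕ} (c : E d) (i0 : Fin d) (h0 : c i0 ≠ 0)
    (hmax : ∀ j, |c j| ≤ |c i0|) :
    maximizers {x : E d | ∑ i, |x i| ≤ 1} c
      = {y : E d | (∑ i, |y i|) = 1 ∧ ∀ i, y i * c i = |y i| * |c i0|} := by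
  set M := |c i0| with hM
  have hMpos : 0 < M := abs_pos.2 h0
  have hterm : ∀ (y : E d) (i : Fin d), y i * c i ≤ |y i| * M := by
    intro y i
    calc y i * c i ≤ |y i * c i| := le_abs_self _
      _ = |y i| * |c i| := abs_mul _ _
      _ ≤ |y i| * M := by gcongr; exact (hmax i)
  have hub : ∀ y : E d, (∑ i, |y i|) ≤ 1 → (∑ i, y i * c i) ≤ M := by
    intro y hy
    calc (∑ i, y i * c i) ≤ ∑ i, |y i| * M := Finset.sum_le_sum (fun i _ => hterm y i)
      _ = (∑ i, |y i|) * M := by rw [Finset.sum_mul]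
      _ ≤ 1 * M := by gcongr
      _ = M := one_mul _
  set ys : E d := EuclideanSpace.single i0 (if c i0 < 0 then (-1:ℝ) else 1) with hys
  have hysval : ∀ j, ys j = if j = i0 then (if c i0 < 0 then (-1:ℝ) else 1) else 0 := by
    intro j; simp [hys, EuclideanSpace.single_apply]
  have hyssum : (∑ i, |ys i|) = 1 := by
    rw [Finset.sum_eq_single i0]
    · by_cases h : c i0 < 0 <;> simp [hysval, h]
    · intro j _ hj; simp [hysval, hj]
    · intro h; exact absurd (Finset.mem_univ i0) h
  have hysinner : (∑ i, ys i * c i) = M := by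
    rw [Finset.sum_eq_single i0]
    · by_cases h : c i0 < 0
      · simp [hysval, h, hM, abs_of_neg h]
      · simp [hysval, h, hM, abs_of_nonneg (not_lt.1 h)]
    · intro j _ hj; simp [hysval, hj]
    · intro h; exact absurd (Finset.mem_univ i0) h
  ext y
  constructor
  · rintro ⟨hy, hymax⟩
    have h1 : M ≤ ∑ i, y i * c i := by
      have := hymax ys (by simpa [Set.mem_setOf_eq] using hyssum.le)
      rw [inner_sum', inner_sum'] at this
      calc M = ∑ i, ys i * c i := hysinner.symm
        _ ≤ _ := this
    have h2 : (∑ i, y i * c i) = M := le_antisymm (hub y hy) h1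
    have hsum1 : (∑ i, |y i|) = 1 := by
      by_contra hne
      have hlt : (∑ i, |y i|) < 1 := lt_of_le_of_ne hy hne
      have : (∑ i, y i * c i) < M := by
        calc (∑ i, y i * c i) ≤ ∑ i, |y i| * M := Finset.sum_le_sum (fun i _ => hterm y i)
          _ = (∑ i, |y i|) * M := by rw [Finset.sum_mul]
          _ < 1 * M := by apply mul_lt_mul_of_pos_right hlt hMpos
          _ = M := one_mul _
      linarith
    refine ⟨hsum1, ?_⟩
    have hsum2 : (∑ i, y i * c i) = ∑ i, |y i| * M := by
      rw [h2]
      calc M = 1 * M := (one_mul _).symm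
        _ = (∑ i, |y i|) * M := by rw [hsum1]
        _ = ∑ i, |y i| * M := by rw [Finset.sum_mul]
    have := (Finset.sum_eq_sum_iff_of_le (fun i _ => hterm y i)).1 hsum2
    exact fun i => this i (Finset.mem_univ i)
  · rintro ⟨hy1, hy2⟩
    refine ⟨by simp [Set.mem_setOf_eq, hy1.le], fun z hz => ?_⟩
    rw [inner_sum', inner_sum']
    calc (∑ i, z i * c i) ≤ M := hub z hz
      _ = (∑ i, |y i|) * M := by rw [hy1, one_mul]
      _ = ∑ i, |y i| * M := by rw [Finset.sum_mul]
      _ = ∑ i, y i * c i := by simp [hy2]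

lemma sg0 : sg 0 = 1 := rfl
lemma sg1 : sg 1 = -1 := rfl
lemma sg2 : sg 2 = 0 := rfl
lemma sg3 : sg 3 = 1 := rfl
lemma sg4 : sg 4 = -1 := rfl

lemma fin5_cases (x : Fin 5) : x = 0 ∨ x = 1 ∨ x = 2 ∨ x = 3 ∨ x = 4 := by omega

lemma phiOf_eq_two_iff {d : ℕ} (c : E d) (i : Fin d) : phiOf c i = 2 ↔ c i = 0 := by
  unfold phiOf
  split_ifs with h1 h2 h3 h4 <;> simp_all <;> decide

lemma mem_Aset_phiOf {d : ℕ} (c : E d) (i : Fin d) :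
    i ∈ Aset (phiOf c) ↔ (c i ≠ 0 ∧ ∀ j, |c j| ≤ |c i|) := by
  rw [Aset, Finset.mem_filter]
  simp only [Finset.mem_univ, true_and]
  unfold phiOf
  split_ifs with h1 h2 h3 h4 <;> simp_all <;> decide

lemma phiOf_fixed_iff {d : ℕ} (c : E d) (i : Fin d) :
    (phiOf c i = 0 ∨ phiOf c i = 1) ↔ (c i ≠ 0 ∧ ¬ (∀ j, |c j| ≤ |c i|)) := by
  unfold phiOf
  split_ifs with h1 h2 h3 h4 <;> simp_all <;> decide

lemma sg_phiOf_mul {d : ℕ} (c : E d) (i : Fin d) (h : c i ≠ 0) :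
    sg (phiOf c i) * c i = |c i| := by
  unfold phiOf
  rcases lt_trichotomy (c i) 0 with hlt | heq | hgt
  · split_ifs with h1 h2 h3 h4 <;>
      first
      | exact absurd h1 h
      | (simp_all [sg]; try linarith [abs_of_neg hlt])
      | (exfalso; linarith)
  · exact absurd heq h
  · split_ifs with h1 h2 h3 h4 <;>
      first
      | exact absurd h1 h
      | (simp_all [sg]; try linarith [abs_of_pos hgt])
      | (exfalso; linarith)

lemma sg_sq {t : Fin 5} (h : t ≠ 2) : sg t * sg t = 1 := by
  rcases fin5_cases t with h'|h'|h'|h'|h' <;> subst h' <;>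
    first | exact absurd rfl h | rw [sg0] | rw [sg1] | rw [sg3] | rw [sg4]
  all_goals norm_num

lemma sg_abs_le (t : Fin 5) : |sg t| ≤ 1 := by
  rcases fin5_cases t with h'|h'|h'|h'|h' <;> subst h' <;>
    first | rw [sg0] | rw [sg1] | rw [sg2] | rw [sg3] | rw [sg4]
  all_goals norm_num

lemma exists_ne_zero_of_ne_zero {d : ℕ} {c : E d} (hc : c ≠ 0) : ∃ i, c i ≠ 0 := by
  by_contra h
  push_neg at h
  exact hc (PiLp.ext (fun i => by simp [h i]))

lemma lemA {d : ℕ} (c : E d) (hc : c ≠ 0) :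
    maximizers (stdCube d + polarDual (stdCube d)) c = Phi (phiOf c) := by
  obtain ⟨i1, hi1⟩ := exists_ne_zero_of_ne_zero hc
  obtain ⟨i0, -, hi0max⟩ := Finset.exists_max_image Finset.univ (fun i => |c i|)
    ⟨i1, Finset.mem_univ i1⟩
  have hmax : ∀ j, |c j| ≤ |c i0| := fun j => hi0max j (Finset.mem_univ j)
  have hM0 : c i0 ≠ 0 := by
    intro h
    apply hi1
    have h' := hmax i1
    rw [h, abs_zero] at h'
    exact abs_eq_zero.1 (le_antisymm h' (abs_nonneg _))
  set M := |c i0| with hMdef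
  have hMpos : 0 < M := abs_pos.2 hM0
  rw [maximizers_add, maximizers_cube, polar_cube, maximizers_cross c i0 hM0 hmax]
  set φ := phiOf c with hφ
  have hA : ∀ i, i ∈ Aset φ ↔ (c i ≠ 0 ∧ ∀ j, |c j| ≤ |c i|) := fun i => mem_Aset_phiOf c i
  have h2 : ∀ i, φ i = 2 ↔ c i = 0 := fun i => phiOf_eq_two_iff c i
  have hfix : ∀ i, (φ i = 0 ∨ φ i = 1) ↔ (c i ≠ 0 ∧ ¬ ∀ j, |c j| ≤ |c i|) :=
    fun i => phiOf_fixed_iff c i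
  have hsgc : ∀ i, c i ≠ 0 → sg (φ i) * c i = |c i| := fun i h => sg_phiOf_mul c i h
  have hAne2 : ∀ i, i ∈ Aset φ → φ i ≠ 2 := by
    intro i hi
    rw [Aset, Finset.mem_filter] at hi
    rcases hi.2 with h | h <;> simp [h] <;> decide
  have hAM : ∀ i, i ∈ Aset φ → c i = sg (φ i) * M := by
    intro i hi
    rw [hA] at hi
    have hciM : |c i| = M := le_antisymm (hmax i) (hi.2 i0)
    have := hsgc i hi.1
    rw [hciM] at this
    have hsq := sg_sq (hAne2 i (by rw [hA]; exact hi))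
    calc c i = (sg (φ i) * sg (φ i)) * c i := by rw [hsq, one_mul]
      _ = sg (φ i) * (sg (φ i) * c i) := by ring
      _ = sg (φ i) * M := by rw [this]
  ext z
  constructor
  · rintro hz
    obtain ⟨x, hx, y, hy, rfl⟩ := Set.mem_add.1 hz
    simp only [Set.mem_setOf_eq] at hx hy
    have hyzero : ∀ i, i ∉ Aset φ → y i = 0 := by
      intro i hi
      rw [hA] at hi
      push_neg at hi
      by_cases hci : c i = 0
      · have := hy.2 i
        rw [hci, mul_zero] at this
        have : |y i| * M = 0 := this.symm
        rcases mul_eq_zero.1 this with h | h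
        · exact abs_eq_zero.1 h
        · exact absurd h (ne_of_gt hMpos)
      · obtain ⟨j, hj⟩ := hi hci
        have hlt : |c i| < M := lt_of_lt_of_le hj (hmax j)
        have h1 := hy.2 i
        have h2' : y i * c i ≤ |y i| * |c i| := by
          calc y i * c i ≤ |y i * c i| := le_abs_self _
            _ = |y i| * |c i| := abs_mul _ _
        rw [h1] at h2'
        have : |y i| * (M - |c i|) ≤ 0 := by nlinarith
        have h3 : |y i| ≤ 0 := by
          by_contra hy0
          push_neg at hy0
          nlinarith
        exact abs_eq_zero.1 (le_antisymm h3 (abs_nonneg _))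
    have hxfix : ∀ i, c i ≠ 0 → x i = sg (φ i) := by
      intro i h
      have := (hx i).2
      rw [← hsgc i h] at this
      exact mul_right_cancel₀ h this
    have hterm : ∀ i, i ∈ Aset φ → sg (φ i) * (x i + y i) = 1 + |y i| := by
      intro i hi
      have hci : c i ≠ 0 := ((hA i).1 hi).1
      have hsgy : sg (φ i) * y i = |y i| := by
        have h1 := hy.2 i
        rw [hAM i hi] at h1
        have : (sg (φ i) * y i) * M = |y i| * M := by ring_nf; ring_nf at h1; linarith
        exact mul_right_cancel₀ (ne_of_gt hMpos) this
      have hsgx : sg (φ i) * x i = 1 := by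
        rw [hxfix i hci]; exact sg_sq (hAne2 i hi)
      rw [mul_add, hsgx, hsgy]
    refine ⟨?_, ?_, ?_, ?_⟩
    · intro i hi
      have hci : c i = 0 := (h2 i).1 hi
      have hyi : y i = 0 := hyzero i (by rw [hA]; rintro ⟨h, -⟩; exact h hci)
      have : (x + y) i = x i := by simp [hyi]
      rw [this]
      exact (hx i).1
    · intro i hi
      have h' := (hfix i).1 hi
      have hyi : y i = 0 := hyzero i (by rw [hA]; rintro ⟨-, h⟩; exact h'.2 h)
      have : (x + y) i = x i := by simp [hyi]
      rw [this, hxfix i h'.1]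
    · intro i hi
      have : (x + y) i = x i + y i := by simp
      rw [this, hterm i hi]
      have := abs_nonneg (y i)
      linarith
    · have hsimp : ∀ i ∈ Aset φ, sg (φ i) * (x + y) i = 1 + |y i| := by
        intro i hi
        have : (x + y) i = x i + y i := by simp
        rw [this]; exact hterm i hi
      rw [Finset.sum_congr rfl hsimp, Finset.sum_add_distrib, Finset.sum_const, nsmul_eq_mul, mul_one]
      have : (∑ i ∈ Aset φ, |y i|) = ∑ i, |y i| := by
        apply Finset.sum_subset (Finset.subset_univ _)
        intro i _ hi
        rw [hyzero i hi, abs_zero]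
      rw [this, hy.1]
  · intro hz
    obtain ⟨hz1, hz2, hz3, hz4⟩ := hz
    classical
    set x : E d := WithLp.toLp 2 (fun i => if c i = 0 then z i else sg (φ i)) with hxdef
    set y : E d := z - x with hydef
    have hxv : ∀ i, x i = if c i = 0 then z i else sg (φ i) := fun i => rfl
    have hyv : ∀ i, y i = z i - x i := fun i => by rw [hydef]; simp
    have hxy : x + y = z := by rw [hydef]; abel
    have hAiff : ∀ i, i ∈ Aset φ ↔ (φ i = 3 ∨ φ i = 4) := by
      intro i; rw [Aset, Finset.mem_filter]; simp
    have hyA : ∀ i, i ∉ Aset φ → y i = 0 := by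
      intro i hi
      by_cases hci : c i = 0
      · rw [hyv, hxv, if_pos hci, sub_self]
      · have hfix' : φ i = 0 ∨ φ i = 1 := by
          rcases fin5_cases (φ i) with h|h|h|h|h
          · exact Or.inl h
          · exact Or.inr h
          · exact absurd ((h2 i).1 h) hci
          · exact absurd ((hAiff i).2 (Or.inl h)) hi
          · exact absurd ((hAiff i).2 (Or.inr h)) hi
        rw [hyv, hxv, if_neg hci, hz2 i hfix', sub_self]
    have hsgabs : ∀ i, i ∈ Aset φ → |sg (φ i)| = 1 := by
      intro i hi
      have h := sg_sq (hAne2 i hi)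
      nlinarith [abs_nonneg (sg (φ i)), abs_mul_abs_self (sg (φ i))]
    have hsgz : ∀ i, i ∈ Aset φ → sg (φ i) * y i = sg (φ i) * z i - 1 := by
      intro i hi
      have hci : c i ≠ 0 := ((hA i).1 hi).1
      rw [hyv, hxv, if_neg hci, mul_sub, sg_sq (hAne2 i hi)]
    have hsgy : ∀ i, i ∈ Aset φ → sg (φ i) * y i = |y i| := by
      intro i hi
      have h0 : 0 ≤ sg (φ i) * y i := by
        rw [hsgz i hi]; linarith [hz3 i hi]
      calc sg (φ i) * y i = |sg (φ i) * y i| := (abs_of_nonneg h0).symm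
        _ = |sg (φ i)| * |y i| := abs_mul _ _
        _ = |y i| := by rw [hsgabs i hi, one_mul]
    refine Set.mem_add.2 ⟨x, ?_, y, ?_, hxy⟩
    · intro i
      by_cases hci : c i = 0
      · refine ⟨?_, ?_⟩
        · rw [hxv, if_pos hci]; exact hz1 i ((h2 i).2 hci)
        · rw [hci, mul_zero, abs_zero]
      · refine ⟨?_, ?_⟩
        · rw [hxv, if_neg hci]; exact sg_abs_le _
        · rw [hxv, if_neg hci]; exact hsgc i hci
    · refine ⟨?_, ?_⟩
      · have hsub : (∑ i, |y i|) = ∑ i ∈ Aset φ, |y i| := by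
          symm
          apply Finset.sum_subset (Finset.subset_univ _)
          intro i _ hi
          rw [hyA i hi, abs_zero]
        rw [hsub, Finset.sum_congr rfl (fun i hi => ((hsgy i hi).symm.trans (hsgz i hi)))]
        rw [Finset.sum_sub_distrib, hz4, Finset.sum_const, nsmul_eq_mul, mul_one]
        ring
      · intro i
        by_cases hi : i ∈ Aset φ
        · rw [hAM i hi]
          calc y i * (sg (φ i) * M) = (sg (φ i) * y i) * M := by ring
            _ = |y i| * M := by rw [hsgy i hi]
        · rw [hyA i hi, zero_mul, abs_zero, zero_mul]

lemma cOf_val {d : ℕ} (φ : Fin d → Fin 5) (i : Fin d) :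
    (φ i = 0 → cOf φ i = 1) ∧ (φ i = 1 → cOf φ i = -1) ∧ (φ i = 2 → cOf φ i = 0) ∧
    (φ i = 3 → cOf φ i = 2) ∧ (φ i = 4 → cOf φ i = -2) := by
  refine ⟨?_, ?_, ?_, ?_, ?_⟩ <;> intro h <;> simp [cOf, h, sg] <;> norm_num

lemma abs_cOf_le {d : ℕ} (φ : Fin d → Fin 5) (j : Fin d) : |cOf φ j| ≤ 2 := by
  obtain ⟨c0, c1, c2, c3, c4⟩ := cOf_val φ j
  rcases fin5_cases (φ j) with h|h|h|h|h
  · rw [c0 h]; norm_num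
  · rw [c1 h]; norm_num
  · rw [c2 h]; norm_num
  · rw [c3 h]; norm_num
  · rw [c4 h]; norm_num

lemma cOf_ne_zero {d : ℕ} {φ : Fin d → Fin 5} (hA : (Aset φ).Nonempty) : cOf φ ≠ 0 := by
  obtain ⟨j, hj⟩ := hA
  rw [Aset, Finset.mem_filter] at hj
  intro h
  have hz : cOf φ j = 0 := by rw [h]; rfl
  obtain ⟨c0, c1, c2, c3, c4⟩ := cOf_val φ j
  rcases hj.2 with h'|h'
  · rw [c3 h'] at hz; norm_num at hz
  · rw [c4 h'] at hz; norm_num at hz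

lemma phiOf_cOf {d : ℕ} {φ : Fin d → Fin 5} (hA : (Aset φ).Nonempty) :
    phiOf (cOf φ) = φ := by
  obtain ⟨j0, hj0⟩ := hA
  have hj0A : |cOf φ j0| = 2 := by
    rw [Aset, Finset.mem_filter] at hj0
    obtain ⟨c0, c1, c2, c3, c4⟩ := cOf_val φ j0
    rcases hj0.2 with h'|h'
    · rw [c3 h']; norm_num
    · rw [c4 h']; norm_num
  funext i
  obtain ⟨c0, c1, c2, c3, c4⟩ := cOf_val φ i
  unfold phiOf
  rcases fin5_cases (φ i) with h|h|h|h|h <;> rw [h]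
  · rw [if_neg (by rw [c0 h]; norm_num), if_neg, if_pos (by rw [c0 h]; norm_num)]
    intro hall
    have := hall j0
    rw [hj0A, c0 h] at this
    norm_num at this
  · rw [if_neg (by rw [c1 h]; norm_num), if_neg, if_neg (by rw [c1 h]; norm_num)]
    intro hall
    have := hall j0
    rw [hj0A, c1 h] at this
    norm_num at this
  · rw [if_pos (c2 h)]
  · rw [if_neg (by rw [c3 h]; norm_num),
      if_pos (fun j => by rw [c3 h]; norm_num [abs_cOf_le φ j]),
      if_pos (by rw [c3 h]; norm_num)]
  · rw [if_neg (by rw [c4 h]; norm_num),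
      if_pos (fun j => by rw [c4 h]; norm_num [abs_cOf_le φ j]),
      if_neg (by rw [c4 h]; norm_num)]

lemma pbase_val {d : ℕ} (φ : Fin d → Fin 5) (i : Fin d) :
    (φ i = 0 → pbase φ i = 1) ∧ (φ i = 1 → pbase φ i = -1) ∧ (φ i = 2 → pbase φ i = 0) ∧
    (φ i = 3 → pbase φ i = 1 + 1/((Aset φ).card : ℝ)) ∧
    (φ i = 4 → pbase φ i = -(1 + 1/((Aset φ).card : ℝ))) := by
  refine ⟨?_, ?_, ?_, ?_, ?_⟩ <;> intro h <;> simp [pbase, h, sg] <;> ring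

lemma inv_card_pos {d : ℕ} {φ : Fin d → Fin 5} (hA : (Aset φ).Nonempty) :
    0 < 1/((Aset φ).card : ℝ) := by
  have : 0 < (Aset φ).card := Finset.card_pos.2 hA
  positivity

lemma mem_Aset_iff {d : ℕ} (φ : Fin d → Fin 5) (i : Fin d) :
    i ∈ Aset φ ↔ (φ i = 3 ∨ φ i = 4) := by
  rw [Aset, Finset.mem_filter]; simp

lemma pbase_mem {d : ℕ} {φ : Fin d → Fin 5} (hA : (Aset φ).Nonempty) :
    pbase φ ∈ Phi φ := by
  have hcard : ((Aset φ).card : ℝ) ≠ 0 := by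
    have : 0 < (Aset φ).card := Finset.card_pos.2 hA
    positivity
  refine ⟨?_, ?_, ?_, ?_⟩
  · intro i hi
    rw [(pbase_val φ i).2.2.1 hi]
    norm_num
  · intro i hi
    rcases hi with h|h
    · rw [(pbase_val φ i).1 h, h, sg0]
    · rw [(pbase_val φ i).2.1 h, h, sg1]
  · intro i hi
    rcases (mem_Aset_iff φ i).1 hi with h|h
    · rw [(pbase_val φ i).2.2.2.1 h, h, sg3, one_mul]
      have := inv_card_pos hA
      linarith
    · rw [(pbase_val φ i).2.2.2.2 h, h, sg4]
      have := inv_card_pos hA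
      nlinarith
  · have hterm : ∀ i ∈ Aset φ, sg (φ i) * pbase φ i = 1 + 1/((Aset φ).card : ℝ) := by
      intro i hi
      rcases (mem_Aset_iff φ i).1 hi with h|h
      · rw [(pbase_val φ i).2.2.2.1 h, h, sg3, one_mul]
      · rw [(pbase_val φ i).2.2.2.2 h, h, sg4]; ring
    rw [Finset.sum_congr rfl hterm, Finset.sum_const, nsmul_eq_mul]
    field_simp

lemma Phi_coord_bounds {d : ℕ} {φ : Fin d → Fin 5} {x : E d} (hx : x ∈ Phi φ) (i : Fin d) :
    (φ i = 0 → x i = 1) ∧ (φ i = 1 → x i = -1) ∧ (φ i = 3 → 1 ≤ x i) ∧ (φ i = 4 → x i ≤ -1) := by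
  obtain ⟨h1, h2, h3, h4⟩ := hx
  refine ⟨?_, ?_, ?_, ?_⟩ <;> intro h
  · rw [h2 i (Or.inl h), h, sg0]
  · rw [h2 i (Or.inr h), h, sg1]
  · have := h3 i ((mem_Aset_iff φ i).2 (Or.inl h))
    rw [h, sg3, one_mul] at this
    exact this
  · have := h3 i ((mem_Aset_iff φ i).2 (Or.inr h))
    rw [h, sg4] at this
    linarith

lemma Phi_inj {d : ℕ} {φ φ' : Fin d → Fin 5} (hA : (Aset φ).Nonempty)
    (hA' : (Aset φ').Nonempty) (h : Phi φ = Phi φ') : φ = φ' := by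
  have hq' : pbase φ ∈ Phi φ' := h ▸ pbase_mem hA
  have hq : pbase φ' ∈ Phi φ := h.symm ▸ pbase_mem hA'
  have hnp := inv_card_pos hA
  have hnp' := inv_card_pos hA'
  funext i
  obtain ⟨b0, b1, b3, b4⟩ := Phi_coord_bounds hq i
  obtain ⟨b0', b1', b3', b4'⟩ := Phi_coord_bounds hq' i
  obtain ⟨p0, p1, p2, p3, p4⟩ := pbase_val φ i
  obtain ⟨q0, q1, q2, q3, q4⟩ := pbase_val φ' i
  rcases fin5_cases (φ i) with ha|ha|ha|ha|ha <;> rcases fin5_cases (φ' i) with hb|hb|hb|hb|hb <;>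
      rw [ha, hb] <;> try rfl
  · exfalso; have := b0 ha; rw [q1 hb] at this; norm_num at this
  · exfalso; have := b0 ha; rw [q2 hb] at this; norm_num at this
  · exfalso; have := b0 ha; rw [q3 hb] at this; linarith
  · exfalso; have := b0 ha; rw [q4 hb] at this; linarith
  · exfalso; have := b1 ha; rw [q0 hb] at this; norm_num at this
  · exfalso; have := b1 ha; rw [q2 hb] at this; norm_num at this
  · exfalso; have := b1 ha; rw [q3 hb] at this; linarith
  · exfalso; have := b1 ha; rw [q4 hb] at this; linarith
  · exfalso; have := b0' hb; rw [p2 ha] at this; norm_num at this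
  · exfalso; have := b1' hb; rw [p2 ha] at this; norm_num at this
  · exfalso; have := b3' hb; rw [p2 ha] at this; linarith
  · exfalso; have := b4' hb; rw [p2 ha] at this; linarith
  · exfalso; have := b0' hb; rw [p3 ha] at this; linarith
  · exfalso; have := b1' hb; rw [p3 ha] at this; linarith
  · exfalso; have := b3 ha; rw [q2 hb] at this; linarith
  · exfalso; have := b4' hb; rw [p3 ha] at this; linarith
  · exfalso; have := b0' hb; rw [p4 ha] at this; linarith
  · exfalso; have := b1' hb; rw [p4 ha] at this; linarith
  · exfalso; have := b4 ha; rw [q2 hb] at this; linarith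
  · exfalso; have := b3' hb; rw [p4 ha] at this; linarith

def Vsub {d : ℕ} (φ : Fin d → Fin 5) : Submodule ℝ (E d) where
  carrier := {v | (∀ i, (φ i = 0 ∨ φ i = 1) → v i = 0) ∧ (∑ i ∈ Aset φ, sg (φ i) * v i) = 0}
  add_mem' := by
    rintro a b ⟨ha1, ha2⟩ ⟨hb1, hb2⟩
    constructor
    · intro i hi
      have : (a + b) i = a i + b i := by simp
      rw [this, ha1 i hi, hb1 i hi, add_zero]
    · have : ∀ i ∈ Aset φ, sg (φ i) * (a + b) i = sg (φ i) * a i + sg (φ i) * b i := by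
        intro i _
        have : (a + b) i = a i + b i := by simp
        rw [this]; ring
      rw [Finset.sum_congr rfl this, Finset.sum_add_distrib, ha2, hb2, add_zero]
  zero_mem' := by
    constructor
    · intro i _; rfl
    · simp
  smul_mem' := by
    rintro r a ⟨ha1, ha2⟩
    constructor
    · intro i hi
      have : (r • a) i = r * a i := by simp
      rw [this, ha1 i hi, mul_zero]
    · have : ∀ i ∈ Aset φ, sg (φ i) * (r • a) i = r * (sg (φ i) * a i) := by
        intro i _
        have : (r • a) i = r * a i := by simp
        rw [this]; ring
      rw [Finset.sum_congr rfl this, ← Finset.mul_sum, ha2, mul_zero]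

lemma sum_single_apply {d : ℕ} (s : Finset (Fin d)) (f : Fin d → ℝ) (t : Fin d) :
    (∑ i ∈ s, f i • EuclideanSpace.single i (1:ℝ)) t = if t ∈ s then f t else 0 := by
  rw [WithLp.ofLp_sum, Finset.sum_apply]
  have : ∀ i ∈ s, (f i • EuclideanSpace.single i (1:ℝ)) t = if i = t then f i else 0 := by
    intro i _
    by_cases h : i = t
    · subst h; simp [EuclideanSpace.single_apply]
    · simp [EuclideanSpace.single_apply, h, Ne.symm h]
  rw [Finset.sum_congr rfl this, Finset.sum_ite_eq']

lemma sg_ne_zero {t : Fin 5} (h : t ≠ 2) : sg t ≠ 0 := by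
  intro h0
  have := sg_sq h
  rw [h0, mul_zero] at this
  norm_num at this

def genFam {d : ℕ} (φ : Fin d → Fin 5) (i0 : Fin d) :
    ({i : Fin d // φ i = 2} ⊕ {i : Fin d // (φ i = 3 ∨ φ i = 4) ∧ i ≠ i0}) → E d
  | Sum.inl i => EuclideanSpace.single i.1 1
  | Sum.inr i => EuclideanSpace.single i.1 (sg (φ i.1)) - EuclideanSpace.single i0 (sg (φ i0))

lemma ne_two_of_mem_Aset {d : ℕ} {φ : Fin d → Fin 5} {i : Fin d} (h : i ∈ Aset φ) : φ i ≠ 2 := by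
  rcases (mem_Aset_iff φ i).1 h with h'|h' <;> rw [h'] <;> decide

lemma sum_pair_apply {d : ℕ} (φ : Fin d → Fin 5) (i0 : Fin d) (w : Fin d → ℝ) (t : Fin d) :
    (∑ j ∈ (Aset φ).erase i0,
        w j • (EuclideanSpace.single j (sg (φ j)) - EuclideanSpace.single i0 (sg (φ i0)))) t
      = (if t ∈ (Aset φ).erase i0 then w t * sg (φ t) else 0)
        - (if t = i0 then (∑ j ∈ (Aset φ).erase i0, w j) * sg (φ i0) else 0) := by
  rw [WithLp.ofLp_sum, Finset.sum_apply]
  have hterm : ∀ j ∈ (Aset φ).erase i0,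
      (w j • (EuclideanSpace.single j (sg (φ j)) - EuclideanSpace.single i0 (sg (φ i0)))) t
        = (if j = t then w j * sg (φ j) else 0) - w j * (if t = i0 then sg (φ i0) else 0) := by
    intro j _
    have : (w j • (EuclideanSpace.single j (sg (φ j)) - EuclideanSpace.single i0 (sg (φ i0)))) t
        = w j * ((if t = j then sg (φ j) else 0) - (if t = i0 then sg (φ i0) else 0)) := by
      simp [EuclideanSpace.single_apply]
    rw [this, mul_sub]
    congr 1
    by_cases h : j = t
    · subst h; simp
    · simp [h, Ne.symm h]
  rw [Finset.sum_congr rfl hterm, Finset.sum_sub_distrib]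
  congr 1
  · rw [Finset.sum_ite_eq']
  · rw [← Finset.sum_mul]
    by_cases h : t = i0 <;> simp [h]

lemma repr_eq {d : ℕ} {φ : Fin d → Fin 5} {i0 : Fin d} (hi0 : i0 ∈ Aset φ) (v : E d)
    (hv1 : ∀ i, (φ i = 0 ∨ φ i = 1) → v i = 0)
    (hv2 : (∑ i ∈ Aset φ, sg (φ i) * v i) = 0) :
    v = (∑ i ∈ Finset.univ.filter (fun i => φ i = 2), v i • EuclideanSpace.single i (1:ℝ))
      + ∑ j ∈ (Aset φ).erase i0, (sg (φ j) * v j) •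
          (EuclideanSpace.single j (sg (φ j)) - EuclideanSpace.single i0 (sg (φ i0))) := by
  have hsum_erase : (∑ j ∈ (Aset φ).erase i0, sg (φ j) * v j) = -(sg (φ i0) * v i0) := by
    have h := Finset.add_sum_erase (Aset φ) (fun j => sg (φ j) * v j) hi0
    simp only at h
    rw [hv2] at h
    linarith
  have hi034 : φ i0 = 3 ∨ φ i0 = 4 := (mem_Aset_iff φ i0).1 hi0
  ext t
  have happ : ((∑ i ∈ Finset.univ.filter (fun i => φ i = 2), v i • EuclideanSpace.single i (1:ℝ))
      + ∑ j ∈ (Aset φ).erase i0, (sg (φ j) * v j) •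
          (EuclideanSpace.single j (sg (φ j)) - EuclideanSpace.single i0 (sg (φ i0)))) t
      = (if t ∈ Finset.univ.filter (fun i => φ i = 2) then v t else 0)
        + ((if t ∈ (Aset φ).erase i0 then (sg (φ t) * v t) * sg (φ t) else 0)
          - (if t = i0 then (∑ j ∈ (Aset φ).erase i0, sg (φ j) * v j) * sg (φ i0) else 0)) := by
    have h1 := sum_single_apply (Finset.univ.filter (fun i => φ i = 2)) (fun i => v i) t
    have h2 := sum_pair_apply φ i0 (fun j => sg (φ j) * v j) t
    have : ∀ (a b : E d), (a + b) t = a t + b t := by intro a b; simp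
    rw [this, h1, h2]
  rw [happ]
  by_cases ht0 : t = i0
  · subst ht0
    rw [if_neg (by simp [ne_two_of_mem_Aset hi0]), if_neg (Finset.notMem_erase t _), if_pos rfl,
      hsum_erase]
    have hsq : sg (φ t) * sg (φ t) = 1 := sg_sq (ne_two_of_mem_Aset hi0)
    linear_combination (-(v t)) * hsq
  · by_cases htA : t ∈ Aset φ
    · have htE : t ∈ (Aset φ).erase i0 := Finset.mem_erase.2 ⟨ht0, htA⟩
      rw [if_neg (by simp [ne_two_of_mem_Aset htA]), if_pos htE, if_neg ht0]
      have hsq : sg (φ t) * sg (φ t) = 1 := sg_sq (ne_two_of_mem_Aset htA)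
      linear_combination (-(v t)) * hsq
    · by_cases ht2 : φ t = 2
      · rw [if_pos (by simp [ht2]), if_neg (fun h => htA (Finset.mem_of_mem_erase h)), if_neg ht0]
        ring
      · have hfix : φ t = 0 ∨ φ t = 1 := by
          rcases fin5_cases (φ t) with h|h|h|h|h
          · exact Or.inl h
          · exact Or.inr h
          · exact absurd h ht2
          · exact absurd ((mem_Aset_iff φ t).2 (Or.inl h)) htA
          · exact absurd ((mem_Aset_iff φ t).2 (Or.inr h)) htA
        rw [if_neg (by simp [ht2]), if_neg (fun h => htA (Finset.mem_of_mem_erase h)), if_neg ht0,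
          hv1 t hfix]
        ring

lemma genFam_mem_Vsub {d : ℕ} {φ : Fin d → Fin 5} {i0 : Fin d} (hi0 : i0 ∈ Aset φ) (x) :
    genFam φ i0 x ∈ Vsub φ := by
  rcases x with ⟨i, hi⟩ | ⟨i, hi⟩
  · constructor
    · intro j hj
      have hji : j ≠ i := by
        intro h; subst h
        rcases hj with h|h <;> rw [hi] at h <;> exact absurd h (by decide)
      show EuclideanSpace.single i (1:ℝ) j = 0
      simp [EuclideanSpace.single_apply, hji]
    · show (∑ j ∈ Aset φ, sg (φ j) * EuclideanSpace.single i (1:ℝ) j) = 0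
      apply Finset.sum_eq_zero
      intro j hj
      have hji : j ≠ i := by
        intro h; subst h
        exact absurd hi (by simpa using ne_two_of_mem_Aset hj)
      simp [EuclideanSpace.single_apply, hji]
  · have hiA : i ∈ Aset φ := (mem_Aset_iff φ i).2 hi.1
    constructor
    · intro j hj
      have hji : j ≠ i := by
        intro h; subst h
        rcases hj with h|h <;> rcases hi.1 with h'|h' <;> rw [h'] at h <;> exact absurd h (by decide)
      have hji0 : j ≠ i0 := by
        intro h; subst h
        rcases hj with h|h <;> rcases (mem_Aset_iff φ j).1 hi0 with h'|h' <;> rw [h'] at h <;>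
          exact absurd h (by decide)
      show EuclideanSpace.single i (sg (φ i)) j - EuclideanSpace.single i0 (sg (φ i0)) j = 0
      simp [EuclideanSpace.single_apply, hji, hji0]
    · show (∑ j ∈ Aset φ, sg (φ j) *
          (EuclideanSpace.single i (sg (φ i)) - EuclideanSpace.single i0 (sg (φ i0))) j) = 0
      have hterm : ∀ j ∈ Aset φ,
          sg (φ j) * (EuclideanSpace.single i (sg (φ i)) - EuclideanSpace.single i0 (sg (φ i0))) j
          = (if j = i then 1 else 0) - (if j = i0 then 1 else 0) := by
        intro j hj
        have : (EuclideanSpace.single i (sg (φ i)) - EuclideanSpace.single i0 (sg (φ i0))) j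
            = (if j = i then sg (φ i) else 0) - (if j = i0 then sg (φ i0) else 0) := by
          simp [EuclideanSpace.single_apply]
        rw [this, mul_sub]
        congr 1
        · by_cases h : j = i
          · subst h; simp [sg_sq (ne_two_of_mem_Aset hj)]
          · simp [h]
        · by_cases h : j = i0
          · subst h; simp [sg_sq (ne_two_of_mem_Aset hj)]
          · simp [h]
      rw [Finset.sum_congr rfl hterm, Finset.sum_sub_distrib]
      rw [Finset.sum_ite_eq' (Aset φ) i, Finset.sum_ite_eq' (Aset φ) i0,
        if_pos hiA, if_pos hi0]
      ring

lemma span_genFam {d : ℕ} {φ : Fin d → Fin 5} {i0 : Fin d} (hi0 : i0 ∈ Aset φ) :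
    Submodule.span ℝ (Set.range (genFam φ i0)) = Vsub φ := by
  apply le_antisymm
  · rw [Submodule.span_le]
    rintro _ ⟨x, rfl⟩
    exact genFam_mem_Vsub hi0 x
  · rintro v ⟨hv1, hv2⟩
    rw [repr_eq hi0 v hv1 hv2]
    refine Submodule.add_mem _ (Submodule.sum_mem _ ?_) (Submodule.sum_mem _ ?_)
    · intro i hi
      refine Submodule.smul_mem _ _ (Submodule.subset_span ?_)
      exact ⟨Sum.inl ⟨i, (Finset.mem_filter.1 hi).2⟩, rfl⟩
    · intro j hj
      refine Submodule.smul_mem _ _ (Submodule.subset_span ?_)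
      have h := Finset.mem_erase.1 hj
      exact ⟨Sum.inr ⟨j, ⟨(mem_Aset_iff φ j).1 h.2, h.1⟩⟩, rfl⟩

lemma linind_genFam {d : ℕ} {φ : Fin d → Fin 5} {i0 : Fin d} (hi0 : i0 ∈ Aset φ) :
    LinearIndependent ℝ (genFam φ i0) := by
  rw [Fintype.linearIndependent_iff]
  intro g hg x
  have happ : ∀ t : Fin d, (∑ x, g x • genFam φ i0 x) t = 0 := by
    intro t
    rw [hg]
    rfl
  rcases x with ⟨i, hi⟩ | ⟨i, hi⟩
  · have := happ i
    rw [WithLp.ofLp_sum, Finset.sum_apply] at this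
    rw [Finset.sum_eq_single (Sum.inl ⟨i, hi⟩)] at this
    · simpa [genFam, EuclideanSpace.single_apply] using this
    · rintro (⟨j, hj⟩ | ⟨j, hj⟩) _ hne
      · have hji : j ≠ i := by
          intro h; subst h; exact hne (by rfl)
        simp [genFam, EuclideanSpace.single_apply, Ne.symm hji]
      · have hji : j ≠ i := by
          intro h; subst h; rcases hj.1 with h'|h' <;> rw [h'] at hi <;> exact absurd hi (by decide)
        have hi0i : i0 ≠ i := by
          intro h; subst h
          rcases (mem_Aset_iff φ i0).1 hi0 with h'|h' <;> rw [h'] at hi <;>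
            exact absurd hi (by decide)
        simp [genFam, EuclideanSpace.single_apply, Ne.symm hji, Ne.symm hi0i]
    · intro h; exact absurd (Finset.mem_univ _) h
  · have := happ i
    rw [WithLp.ofLp_sum, Finset.sum_apply] at this
    rw [Finset.sum_eq_single (Sum.inr ⟨i, hi⟩)] at this
    · have h2 : φ i ≠ 2 := by
        rcases hi.1 with h'|h' <;> rw [h'] <;> decide
      have : g (Sum.inr ⟨i, hi⟩) * sg (φ i) = 0 := by
        simpa [genFam, EuclideanSpace.single_apply, hi.2] using this
      rcases mul_eq_zero.1 this with h|h
      · exact h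
      · exact absurd h (sg_ne_zero h2)
    · rintro (⟨j, hj⟩ | ⟨j, hj⟩) _ hne
      · have hji : j ≠ i := by
          intro h; subst h; rcases hi.1 with h'|h' <;> rw [h'] at hj <;> exact absurd hj (by decide)
        simp [genFam, EuclideanSpace.single_apply, Ne.symm hji]
      · have hji : j ≠ i := by
          intro h; subst h; exact hne (by rfl)
        simp [genFam, EuclideanSpace.single_apply, Ne.symm hji, hi.2]
    · intro h; exact absurd (Finset.mem_univ _) h

lemma finrank_Vsub {d : ℕ} {φ : Fin d → Fin 5} (hA : (Aset φ).Nonempty) :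
    Module.finrank ℝ (Vsub φ) =
      (Finset.univ.filter (fun i => φ i = 2)).card + (Aset φ).card - 1 := by
  obtain ⟨i0, hi0⟩ := hA
  rw [← span_genFam hi0, finrank_span_eq_card (linind_genFam hi0)]
  rw [Fintype.card_sum, Fintype.card_subtype, Fintype.card_subtype]
  have herase : (Finset.univ.filter (fun i => (φ i = 3 ∨ φ i = 4) ∧ i ≠ i0)) = (Aset φ).erase i0 := by
    ext j
    simp [Aset, Finset.mem_erase, and_comm]
  rw [herase, Finset.card_erase_of_mem hi0]
  have : 1 ≤ (Aset φ).card := Finset.card_pos.2 ⟨i0, hi0⟩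
  omega

lemma direction_Phi {d : ℕ} {φ : Fin d → Fin 5} (hA : (Aset φ).Nonempty) :
    (affineSpan ℝ (Phi φ)).direction = Vsub φ := by
  rw [direction_affineSpan]
  apply le_antisymm
  · rw [vectorSpan_def, Submodule.span_le]
    rintro u hu
    obtain ⟨x, hx, y, hy, rfl⟩ := Set.mem_vsub.1 hu
    obtain ⟨hx1, hx2, hx3, hx4⟩ := hx
    obtain ⟨hy1, hy2, hy3, hy4⟩ := hy
    have hsub : ∀ i, (x -ᵥ y) i = x i - y i := fun i => rfl
    constructor
    · intro i hi
      rw [hsub i, hx2 i hi, hy2 i hi, sub_self]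
    · have : ∀ i ∈ Aset φ, sg (φ i) * (x -ᵥ y) i = sg (φ i) * x i - sg (φ i) * y i := by
        intro i _
        rw [hsub i]; ring
      rw [Finset.sum_congr rfl this, Finset.sum_sub_distrib, hx4, hy4, sub_self]
  · intro v hv
    obtain ⟨hv1, hv2⟩ := hv
    have hp := pbase_mem hA
    set N := ∑ j, |v j| with hN
    have hN0 : 0 ≤ N := Finset.sum_nonneg (fun j _ => abs_nonneg _)
    have hvle : ∀ i, |v i| ≤ N := by
      intro i
      exact Finset.single_le_sum (f := fun j => |v j|) (fun j _ => abs_nonneg _)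
        (Finset.mem_univ i)
    set a := ((Aset φ).card : ℝ) with ha
    have ha1 : (1:ℝ) ≤ a := by
      rw [ha]
      exact Nat.one_le_cast.2 (Finset.card_pos.2 hA)
    set ε := ((a+1) * (N+1))⁻¹ with hεdef
    have hε : 0 < ε := by positivity
    have hεNle : ε * N ≤ 1/(a+1) := by
      rw [hεdef, inv_eq_one_div, div_mul_eq_mul_div, div_le_div_iff₀ (by positivity) (by positivity)]
      nlinarith
    have hεvle : ∀ i, ε * |v i| ≤ 1/(a+1) := by
      intro i
      calc ε * |v i| ≤ ε * N := by gcongr; exact hvle i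
        _ ≤ 1/(a+1) := hεNle
    have happ : ∀ i, (pbase φ + ε • v) i = pbase φ i + ε * v i := by
      intro i; simp
    have hmem : pbase φ + ε • v ∈ Phi φ := by
      refine ⟨?_, ?_, ?_, ?_⟩
      · intro i hi
        rw [happ i, (pbase_val φ i).2.2.1 hi, zero_add, abs_mul, abs_of_pos hε]
        calc ε * |v i| ≤ 1/(a+1) := hεvle i
          _ ≤ 1 := by rw [div_le_one (by linarith)]; linarith
      · intro i hi
        rw [happ i, hv1 i hi, mul_zero, add_zero]
        exact hp.2.1 i hi
      · intro i hi
        rw [happ i, mul_add]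
        have h1 : sg (φ i) * pbase φ i = 1 + 1/a := by
          rcases (mem_Aset_iff φ i).1 hi with h|h
          · rw [(pbase_val φ i).2.2.2.1 h, h, sg3, one_mul]
          · rw [(pbase_val φ i).2.2.2.2 h, h, sg4]; ring
        have h2 : -(ε * |v i|) ≤ sg (φ i) * (ε * v i) := by
          have habs : |sg (φ i) * (ε * v i)| = ε * |v i| := by
            rw [abs_mul, abs_mul, abs_of_pos hε]
            have : |sg (φ i)| = 1 := by
              rcases (mem_Aset_iff φ i).1 hi with h|h
              · rw [h, sg3]; norm_num
              · rw [h, sg4]; norm_num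
            rw [this, one_mul]
          linarith [neg_abs_le (sg (φ i) * (ε * v i))]
        have h3 : 1/(a+1) ≤ 1/a := by
          apply one_div_le_one_div_of_le (by linarith) (by linarith)
        calc (1:ℝ) = 1 + 1/a - 1/a := by ring
          _ ≤ 1 + 1/a - 1/(a+1) := by linarith
          _ ≤ 1 + 1/a - ε * |v i| := by linarith [hεvle i]
          _ ≤ sg (φ i) * pbase φ i + sg (φ i) * (ε * v i) := by rw [h1]; linarith
      · have hterm : ∀ i ∈ Aset φ, sg (φ i) * (pbase φ + ε • v) i
            = sg (φ i) * pbase φ i + ε * (sg (φ i) * v i) := by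
          intro i _
          rw [happ i]; ring
        rw [Finset.sum_congr rfl hterm, Finset.sum_add_distrib, hp.2.2.2, ← Finset.mul_sum, hv2,
          mul_zero, add_zero]
    have hvrepr : v = ε⁻¹ • ((pbase φ + ε • v) -ᵥ pbase φ) := by
      rw [vsub_eq_sub, add_sub_cancel_left, smul_smul, inv_mul_cancel₀ (ne_of_gt hε), one_smul]
    rw [hvrepr]
    exact Submodule.smul_mem _ _ (vsub_mem_vectorSpan ℝ hmem hp)

lemma dim_Phi {d : ℕ} {φ : Fin d → Fin 5} (hA : (Aset φ).Nonempty) :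
    dimSet (Phi φ) = (Finset.univ.filter (fun i => φ i = 2)).card + (Aset φ).card - 1 := by
  rw [dimSet, direction_Phi hA, finrank_Vsub hA]

lemma single_mem_P {d : ℕ} (i : Fin d) :
    (EuclideanSpace.single i (2:ℝ)) ∈ stdCube d + polarDual (stdCube d) := by
  rw [polar_cube]
  refine Set.mem_add.2 ⟨EuclideanSpace.single i 1, ?_, EuclideanSpace.single i 1, ?_, ?_⟩
  · intro j
    by_cases h : j = i <;> simp [EuclideanSpace.single_apply, h]
  · show (∑ j, |EuclideanSpace.single i (1:ℝ) j|) ≤ 1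
    rw [Finset.sum_eq_single i]
    · simp
    · intro j _ hj; simp [EuclideanSpace.single_apply, hj]
    · intro h; exact absurd (Finset.mem_univ i) h
  · ext t
    by_cases h : t = i <;> simp [EuclideanSpace.single_apply, h] <;> norm_num

lemma zero_mem_P {d : ℕ} : (0 : E d) ∈ stdCube d + polarDual (stdCube d) := by
  rw [polar_cube]
  refine Set.mem_add.2 ⟨0, ?_, 0, ?_, by simp⟩
  · intro j; show |(0:ℝ)| ≤ 1; norm_num
  · show (∑ j, |(0 : E d) j|) ≤ 1
    simp

lemma dim_P {d : ℕ} : dimSet (stdCube d + polarDual (stdCube d)) = d := by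
  rw [dimSet, direction_affineSpan]
  have htop : vectorSpan ℝ (stdCube d + polarDual (stdCube d)) = ⊤ := by
    rw [eq_top_iff]
    intro v _
    have hrepr : v = ∑ i, (v i / 2) • (EuclideanSpace.single i (2:ℝ)) := by
      ext t
      rw [WithLp.ofLp_sum, Finset.sum_apply]
      have : ∀ i ∈ Finset.univ, ((v i / 2) • (EuclideanSpace.single i (2:ℝ))) t
          = if i = t then v i else 0 := by
        intro i _
        by_cases h : i = t
        · subst h; simp [EuclideanSpace.single_apply]; try ring
        · simp [EuclideanSpace.single_apply, h, Ne.symm h]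
      rw [Finset.sum_congr rfl this, Finset.sum_ite_eq']
      simp
    rw [hrepr]
    apply Submodule.sum_mem
    intro i _
    apply Submodule.smul_mem
    have := vsub_mem_vectorSpan ℝ (single_mem_P i) (zero_mem_P (d := d))
    simpa using this
  rw [htop, finrank_top]
  simp

lemma argmax_exists {d : ℕ} (c : E d) (hc : c ≠ 0) :
    ∃ i0, c i0 ≠ 0 ∧ ∀ j, |c j| ≤ |c i0| := by
  obtain ⟨i1, hi1⟩ := exists_ne_zero_of_ne_zero hc
  obtain ⟨i0, -, hi0max⟩ := Finset.exists_max_image Finset.univ (fun i => |c i|)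
    ⟨i1, Finset.mem_univ i1⟩
  have hmax : ∀ j, |c j| ≤ |c i0| := fun j => hi0max j (Finset.mem_univ j)
  refine ⟨i0, ?_, hmax⟩
  intro h
  apply hi1
  have h' := hmax i1
  rw [h, abs_zero] at h'
  exact abs_eq_zero.1 (le_antisymm h' (abs_nonneg _))

lemma face_set_eq {d : ℕ} (k : ℕ) (hk : k + 1 ≤ d) :
    {F : Set (E d) | IsFace (stdCube d + polarDual (stdCube d)) F ∧ F.Nonempty ∧ dimSet F = k}
      = Phi '' {φ : Fin d → Fin 5 |
          ((Finset.univ.filter (fun i => φ i = 2)).card + (Aset φ).card = k + 1)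
            ∧ (Aset φ).Nonempty} := by
  ext F
  constructor
  · rintro ⟨hface, hne, hdim⟩
    rcases hface with h | h | ⟨c, hc, rfl⟩
    · exact absurd (h ▸ hne) (by simp)
    · exfalso
      rw [h, dim_P] at hdim
      omega
    · have hφA : (Aset (phiOf c)).Nonempty := by
        obtain ⟨i0, hi0, hmax⟩ := argmax_exists c hc
        exact ⟨i0, (mem_Aset_phiOf c i0).2 ⟨hi0, hmax⟩⟩
      rw [lemA c hc] at hdim ⊢
      refine ⟨phiOf c, ⟨?_, hφA⟩, rfl⟩
      rw [dim_Phi hφA] at hdim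
      have := Finset.card_pos.2 hφA
      omega
  · rintro ⟨φ, ⟨hcard, hA⟩, rfl⟩
    refine ⟨?_, ⟨pbase φ, pbase_mem hA⟩, ?_⟩
    · right; right
      exact ⟨cOf φ, cOf_ne_zero hA, by rw [lemA _ (cOf_ne_zero hA), phiOf_cOf hA]⟩
    · rw [dim_Phi hA]
      omega

lemma fVec_eq_ncard {d : ℕ} (k : ℕ) (hk : k + 1 ≤ d) :
    fVec (stdCube d + polarDual (stdCube d)) k
      = {φ : Fin d → Fin 5 |
          ((Finset.univ.filter (fun i => φ i = 2)).card + (Aset φ).card = k + 1)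
            ∧ (Aset φ).Nonempty}.ncard := by
  rw [fVec, face_set_eq k hk]
  apply Set.ncard_image_of_injOn
  rintro φ ⟨-, hA⟩ φ' ⟨-, hA'⟩ h
  exact Phi_inj hA hA' h

def Tset {d : ℕ} (φ : Fin d → Fin 5) : Finset (Fin d) :=
  Finset.univ.filter (fun i => φ i = 2 ∨ φ i = 3 ∨ φ i = 4)

lemma Tcard {d : ℕ} (φ : Fin d → Fin 5) :
    (Finset.univ.filter (fun i => φ i = 2)).card + (Aset φ).card = (Tset φ).card := by
  rw [Tset, Aset]
  rw [show Finset.filter (fun i => φ i = 2 ∨ φ i = 3 ∨ φ i = 4) Finset.univ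
      = Finset.filter (fun i => φ i = 2) Finset.univ
        ∪ Finset.filter (fun i => φ i = 3 ∨ φ i = 4) Finset.univ from Finset.filter_or _ _ _]
  rw [Finset.card_union_of_disjoint]
  rw [Finset.disjoint_left]
  intro i hi1 hi2
  rw [Finset.mem_filter] at hi1 hi2
  rcases hi2.2 with h|h <;> rw [hi1.2] at h <;> exact absurd h (by decide)

lemma card_pi_filter {d : ℕ} (B : Finset (Fin d)) (S₁ S₂ : Finset (Fin 5)) :
    (Finset.univ.filter (fun φ : Fin d → Fin 5 => ∀ i, φ i ∈ (if i ∈ B then S₁ else S₂))).card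
      = S₁.card ^ B.card * S₂.card ^ (d - B.card) := by
  have heq : Finset.univ.filter (fun φ : Fin d → Fin 5 => ∀ i, φ i ∈ (if i ∈ B then S₁ else S₂))
      = Fintype.piFinset (fun i => if i ∈ B then S₁ else S₂) := by
    ext φ
    simp [Fintype.mem_piFinset]
  rw [heq, Fintype.card_piFinset, ← Finset.prod_mul_prod_compl B]
  have h1 : ∀ i ∈ B, (if i ∈ B then S₁ else S₂).card = S₁.card := by
    intro i hi; rw [if_pos hi]
  have h2 : ∀ i ∈ Bᶜ, (if i ∈ B then S₁ else S₂).card = S₂.card := by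
    intro i hi; rw [if_neg (Finset.mem_compl.1 hi)]
  rw [Finset.prod_congr rfl h1, Finset.prod_congr rfl h2, Finset.prod_const, Finset.prod_const,
    Finset.card_compl]
  simp

lemma count_phis {d : ℕ} (m : ℕ) (hm : m ≤ d) :
    (Finset.univ.filter (fun φ : Fin d → Fin 5 =>
        ((Tset φ).card = m) ∧ (Aset φ).Nonempty)).card
      = Nat.choose d m * 2 ^ (d - m) * (3 ^ m - 1) := by
  classical
  set s0 := Finset.univ.filter (fun φ : Fin d → Fin 5 => (Tset φ).card = m) with hs0
  have hsplit := Finset.card_filter_add_card_filter_not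
    (s := s0) (p := fun φ => (Aset φ).Nonempty)
  have htarget : Finset.univ.filter (fun φ : Fin d → Fin 5 =>
      ((Tset φ).card = m) ∧ (Aset φ).Nonempty) = s0.filter (fun φ => (Aset φ).Nonempty) := by
    rw [hs0, Finset.filter_filter]
  have hs0card : s0.card = Nat.choose d m * (3 ^ m * 2 ^ (d - m)) := by
    rw [Finset.card_eq_sum_card_fiberwise (f := Tset)
      (t := Finset.powersetCard m Finset.univ) ?_]
    · have hfib : ∀ B ∈ Finset.powersetCard m Finset.univ,
          (s0.filter (fun φ => Tset φ = B)).card = 3 ^ m * 2 ^ (d - m) := by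
        intro B hB
        have hBcard : B.card = m := (Finset.mem_powersetCard_univ.1 hB)
        have : s0.filter (fun φ => Tset φ = B)
            = Finset.univ.filter (fun φ : Fin d → Fin 5 =>
                ∀ i, φ i ∈ (if i ∈ B then ({2,3,4} : Finset (Fin 5)) else ({0,1} : Finset (Fin 5)))) := by
          ext φ
          rw [Finset.mem_filter, hs0, Finset.mem_filter, Finset.mem_filter]
          simp only [Finset.mem_univ, true_and]
          constructor
          · rintro ⟨-, hTB⟩
            intro i
            by_cases hiB : i ∈ B
            · rw [if_pos hiB]
              have : i ∈ Tset φ := hTB ▸ hiB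
              rw [Tset, Finset.mem_filter] at this
              rcases this.2 with h|h|h <;> rw [h] <;> decide
            · rw [if_neg hiB]
              have : i ∉ Tset φ := fun h => hiB (hTB ▸ h)
              rw [Tset, Finset.mem_filter] at this
              rcases fin5_cases (φ i) with h|h|h|h|h <;> rw [h] <;>
                first
                | decide
                | (exfalso; apply this; refine ⟨Finset.mem_univ i, ?_⟩; rw [h]; decide)
          · intro hall
            have hTB : Tset φ = B := by
              ext i
              rw [Tset, Finset.mem_filter]
              have := hall i
              by_cases hiB : i ∈ B
              · rw [if_pos hiB] at this
                simp only [hiB, iff_true]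
                refine ⟨Finset.mem_univ i, ?_⟩
                revert this
                rcases fin5_cases (φ i) with h|h|h|h|h <;> rw [h] <;> decide
              · rw [if_neg hiB] at this
                simp only [hiB, iff_false]
                rintro ⟨-, hphi⟩
                revert this hphi
                rcases fin5_cases (φ i) with h|h|h|h|h <;> rw [h] <;> decide
            exact ⟨by rw [hTB, hBcard], hTB⟩
        rw [this, card_pi_filter, hBcard,
          show ({2,3,4} : Finset (Fin 5)).card = 3 from rfl,
          show ({0,1} : Finset (Fin 5)).card = 2 from rfl]
      rw [Finset.sum_congr rfl hfib, Finset.sum_const, Finset.card_powersetCard, smul_eq_mul]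
      simp
    · intro φ hφ
      rw [Finset.mem_coe, hs0, Finset.mem_filter] at hφ
      exact Finset.mem_coe.2 (Finset.mem_powersetCard_univ.2 hφ.2)
  have hs2card : (s0.filter (fun φ => ¬ (Aset φ).Nonempty)).card
      = Nat.choose d m * (1 ^ m * 2 ^ (d - m)) := by
    rw [Finset.card_eq_sum_card_fiberwise (f := Tset)
      (t := Finset.powersetCard m Finset.univ) ?_]
    · have hfib : ∀ B ∈ Finset.powersetCard m Finset.univ,
          ((s0.filter (fun φ => ¬ (Aset φ).Nonempty)).filter (fun φ => Tset φ = B)).card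
            = 1 ^ m * 2 ^ (d - m) := by
        intro B hB
        have hBcard : B.card = m := (Finset.mem_powersetCard_univ.1 hB)
        have : (s0.filter (fun φ => ¬ (Aset φ).Nonempty)).filter (fun φ => Tset φ = B)
            = Finset.univ.filter (fun φ : Fin d → Fin 5 =>
                ∀ i, φ i ∈ (if i ∈ B then ({2} : Finset (Fin 5)) else ({0,1} : Finset (Fin 5)))) := by
          ext φ
          rw [Finset.mem_filter, Finset.mem_filter, hs0, Finset.mem_filter, Finset.mem_filter]
          simp only [Finset.mem_univ, true_and]
          have hAE : (¬ (Aset φ).Nonempty) ↔ ∀ i, ¬ (φ i = 3 ∨ φ i = 4) := by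
            rw [Finset.not_nonempty_iff_eq_empty, Aset, Finset.filter_eq_empty_iff]
            simp
          constructor
          · rintro ⟨⟨-, hAe⟩, hTB⟩
            rw [hAE] at hAe
            intro i
            by_cases hiB : i ∈ B
            · rw [if_pos hiB]
              have : i ∈ Tset φ := hTB ▸ hiB
              rw [Tset, Finset.mem_filter] at this
              have h34 := hAe i
              rcases this.2 with h|h|h
              · rw [h]; decide
              · exact absurd (Or.inl h) h34
              · exact absurd (Or.inr h) h34
            · rw [if_neg hiB]
              have : i ∉ Tset φ := fun h => hiB (hTB ▸ h)
              rw [Tset, Finset.mem_filter] at this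
              rcases fin5_cases (φ i) with h|h|h|h|h <;> rw [h] <;>
                first
                | decide
                | (exfalso; apply this; refine ⟨Finset.mem_univ i, ?_⟩; rw [h]; decide)
          · intro hall
            have hTB : Tset φ = B := by
              ext i
              rw [Tset, Finset.mem_filter]
              have := hall i
              by_cases hiB : i ∈ B
              · rw [if_pos hiB] at this
                simp only [hiB, iff_true]
                refine ⟨Finset.mem_univ i, ?_⟩
                revert this
                rcases fin5_cases (φ i) with h|h|h|h|h <;> rw [h] <;> decide
              · rw [if_neg hiB] at this
                simp only [hiB, iff_false]
                rintro ⟨-, hphi⟩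
                revert this hphi
                rcases fin5_cases (φ i) with h|h|h|h|h <;> rw [h] <;> decide
            refine ⟨⟨by rw [hTB, hBcard], ?_⟩, hTB⟩
            rw [hAE]
            intro i
            have := hall i
            by_cases hiB : i ∈ B
            · rw [if_pos hiB] at this
              revert this
              rcases fin5_cases (φ i) with h|h|h|h|h <;> rw [h] <;> decide
            · rw [if_neg hiB] at this
              revert this
              rcases fin5_cases (φ i) with h|h|h|h|h <;> rw [h] <;> decide
        rw [this, card_pi_filter, hBcard,
          show ({2} : Finset (Fin 5)).card = 1 from rfl,
          show ({0,1} : Finset (Fin 5)).card = 2 from rfl]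
      rw [Finset.sum_congr rfl hfib, Finset.sum_const, Finset.card_powersetCard, smul_eq_mul]
      simp
    · intro φ hφ
      rw [Finset.mem_coe, Finset.mem_filter, hs0, Finset.mem_filter] at hφ
      exact Finset.mem_coe.2 (Finset.mem_powersetCard_univ.2 hφ.1.2)
  rw [htarget]
  have : (s0.filter (fun φ => (Aset φ).Nonempty)).card
      = s0.card - (s0.filter (fun φ => ¬ (Aset φ).Nonempty)).card := by
    omega
  rw [this, hs0card, hs2card, one_pow]
  rw [show Nat.choose d m * (3 ^ m * 2 ^ (d - m)) = Nat.choose d m * 2 ^ (d - m) * 3 ^ m by ring,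
    show Nat.choose d m * (1 * 2 ^ (d - m)) = Nat.choose d m * 2 ^ (d - m) * 1 by ring,
    ← Nat.mul_sub]


theorem fVec_nesterov_rounding_cube {d : ℕ} (k : ℕ) (hk : k + 1 ≤ d) :
    fVec (stdCube d + polarDual (stdCube d)) k
      = Nat.choose d (k + 1) * 2 ^ (d - k - 1) * (3 ^ (k + 1) - 1) := by
  classical
  rw [fVec_eq_ncard k hk]
  have hset : {φ : Fin d → Fin 5 |
      ((Finset.univ.filter (fun i => φ i = 2)).card + (Aset φ).card = k + 1)
        ∧ (Aset φ).Nonempty}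
      = {φ : Fin d → Fin 5 | ((Tset φ).card = k + 1) ∧ (Aset φ).Nonempty} := by
    ext φ
    rw [Set.mem_setOf_eq, Set.mem_setOf_eq, Tcard φ]
  rw [hset]
  rw [Set.ncard_eq_toFinset_card', Set.toFinset_setOf]
  rw [count_phis (k + 1) hk]
  rw [show d - (k + 1) = d - k - 1 from (Nat.sub_sub d k 1).symm]
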